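/- For every real γ ≥ 2 there exists a constant c_γ > 0, depending only on γ, such that for every positive integer d and all vectors u, v ∈ ℝ^d: ‖u + v‖₂^γ − ‖u‖₂^γ ≤ γ⟨u, v⟩‖u‖₂^{γ−2} + c_γ(‖v‖₂^γ + ‖v‖₂²‖u‖₂^{γ−2}). -/

import Mathlib

open Real

private lemma aux_pow_nat (n : ℕ) : ∀ x : ℝ, -1 ≤ x → x ≤ 3 → (1+x)^n ≤ 1 + n*x + 5^n * x^2 := by
  induction n with
  | zero => intro x h1 h3; simpa using by nlinarith [sq_nonneg x]
  | succ n ih =>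
    intro x h1 h3
    have h0 : (0:ℝ) ≤ 1 + x := by linarith
    have hK : (n:ℝ) ≤ 5^n := by
      calc (n:ℝ) ≤ 2^n := by exact_mod_cast Nat.le_of_lt (Nat.lt_two_pow_self (n := n))
        _ ≤ 5^n := by apply pow_le_pow_left₀ <;> norm_num
    have hK0 : (0:ℝ) < 5^n := by positivity
    have ihx := ih x h1 h3
    have step : (1+x)^(n+1) ≤ (1 + n*x + 5^n*x^2) * (1+x) := by
      rw [pow_succ]
      exact mul_le_mul_of_nonneg_right ihx h0
    have hx3 : x^3 ≤ 3*x^2 := by nlinarith [sq_nonneg x]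
    have hx3' : (5:ℝ)^n * x^3 ≤ 5^n * (3*x^2) := mul_le_mul_of_nonneg_left hx3 hK0.le
    have hnx : (n:ℝ)*x^2 ≤ 5^n * x^2 := mul_le_mul_of_nonneg_right hK (sq_nonneg x)
    calc (1+x)^(n+1) ≤ (1 + n*x + 5^n*x^2) * (1+x) := step
      _ ≤ 1 + (n+1:ℕ)*x + 5^(n+1) * x^2 := by
        have h5 : (5:ℝ)^(n+1) = 5^n*5 := pow_succ 5 n
        push_cast
        nlinarith [hx3', hnx, h5]

private lemma aux_rpow (p : ℝ) (hp : 1 ≤ p) :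
    ∃ K : ℝ, 0 < K ∧ ∀ x : ℝ, -1 ≤ x → x ≤ 3 → (1+x) ^ p ≤ 1 + p*x + K*x^2 := by
  set n : ℕ := ⌈p⌉₊ + 1 with hn
  have hpn : p ≤ (n : ℝ) := by
    have := Nat.le_ceil p
    push_cast [hn]
    linarith
  have hn2 : (2:ℝ) ≤ (n:ℝ) := by
    have : 1 ≤ ⌈p⌉₊ := Nat.one_le_ceil_iff.mpr (by linarith)
    push_cast [hn]
    exact_mod_cast by omega
  have hK0 : (0:ℝ) < 5^n := by positivity
  have hnK : (n:ℝ) ≤ 5^n := by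
    calc (n:ℝ) ≤ 2^n := by exact_mod_cast Nat.le_of_lt (Nat.lt_two_pow_self (n := n))
      _ ≤ 5^n := by apply pow_le_pow_left₀ <;> norm_num
  refine ⟨5^n, hK0, ?_⟩
  intro x h1 h3
  have h0 : (0:ℝ) ≤ 1 + x := by linarith
  have hn1 : (0:ℝ) < (n:ℝ) - 1 := by linarith
  set θ : ℝ := ((n:ℝ) - p)/((n:ℝ) - 1) with hθdef
  have hθ0 : 0 ≤ θ := div_nonneg (by linarith) hn1.le
  have hθ1 : θ ≤ 1 := by rw [hθdef, div_le_one hn1]; linarith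
  have hθe : θ * ((n:ℝ) - 1) = (n:ℝ) - p := div_mul_cancel₀ _ hn1.ne'
  rcases eq_or_lt_of_le h0 with h0' | h0'
  · -- 1 + x = 0
    have hx : x = -1 := by linarith
    subst hx
    rw [← h0', Real.zero_rpow (by linarith : p ≠ 0)]
    nlinarith [hnK, hpn]
  · have hpow := aux_pow_nat n x h1 h3
    have geo := Real.geom_mean_le_arith_mean2_weighted hθ0 (by linarith : (0:ℝ) ≤ 1-θ)
      h0 (pow_nonneg h0 n) (by ring)
    have hid : (1+x) ^ p = (1+x) ^ θ * ((1+x)^n) ^ (1-θ) := by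
      rw [← Real.rpow_natCast (1+x) n, ← Real.rpow_mul h0, ← Real.rpow_add h0']
      congr 1
      nlinarith [hθe]
    rw [hid]
    have h2 : (1-θ) * ((1+x)^n) ≤ (1-θ) * (1 + n*x + 5^n*x^2) :=
      mul_le_mul_of_nonneg_left hpow (by linarith)
    have h3' : θ*(1+x) + (1-θ)*(1 + n*x + 5^n*x^2) ≤ 1 + p*x + 5^n*x^2 := by
      have hθn : θ + (1-θ)*(n:ℝ) = p := by nlinarith [hθe]
      have hexp : θ*(1+x) + (1-θ)*(1 + n*x + 5^n*x^2)
          = 1 + (θ + (1-θ)*(n:ℝ))*x + (1-θ)*(5^n*x^2) := by ring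
      rw [hexp, hθn]
      nlinarith [mul_nonneg (mul_nonneg hθ0 hK0.le) (sq_nonneg x)]
    linarith [geo]

set_option maxHeartbeats 1600000 in
/-- For every real `γ ≥ 2` there is a constant `c_γ > 0` such that for all dimensions `d`
and all `u v ∈ ℝ^d`:
`‖u + v‖^γ − ‖u‖^γ ≤ γ⟨u,v⟩‖u‖^{γ−2} + c_γ(‖v‖^γ + ‖v‖²‖u‖^{γ−2})`. -/
theorem norm_rpow_taylor_inequality :
    ∀ γ : ℝ, 2 ≤ γ → ∃ c : ℝ, 0 < c ∧
      ∀ (d : ℕ) (u v : EuclideanSpace ℝ (Fin d)),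
        ‖u + v‖ ^ γ - ‖u‖ ^ γ
          ≤ γ * (inner ℝ u v : ℝ) * ‖u‖ ^ (γ - 2)
            + c * (‖v‖ ^ γ + ‖v‖ ^ (2 : ℕ) * ‖u‖ ^ (γ - 2)) := by
  intro γ hγ
  obtain ⟨K, hK, hbound⟩ := aux_rpow (γ/2) (by linarith)
  have hγ0 : (0:ℝ) < γ := by linarith
  have h2γ : (0:ℝ) < (2:ℝ)^γ := Real.rpow_pos_of_pos (by norm_num) γ
  refine ⟨2^γ + γ + γ/2 + 9*K + 1, by linarith, ?_⟩
  intro d u v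
  set a := ‖u‖ with ha_def
  set b := ‖v‖ with hb_def
  set s := ‖u+v‖ with hs_def
  set t := (inner ℝ u v : ℝ) with ht_def
  have ha : 0 ≤ a := norm_nonneg _
  have hb : 0 ≤ b := norm_nonneg _
  have hs : 0 ≤ s := norm_nonneg _
  have hs2 : s^2 = a^2 + 2*t + b^2 := norm_add_sq_real u v
  have hts := abs_real_inner_le_norm u v
  have ht1 : t ≤ a*b := (abs_le.mp hts).2
  have ht2 : -(a*b) ≤ t := (abs_le.mp hts).1
  have hbγ : 0 ≤ b^γ := Real.rpow_nonneg hb γ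
  have hA2 : 0 ≤ a^(γ-2) := Real.rpow_nonneg ha _
  have hb2A2 : 0 ≤ b^(2:ℕ) * a^(γ-2) := mul_nonneg (pow_nonneg hb 2) hA2
  rcases eq_or_lt_of_le ha with ha0 | ha0
  · -- case a = 0
    have hu : u = 0 := norm_eq_zero.mp ha0.symm
    have ht0 : t = 0 := by rw [ht_def, hu, inner_zero_left]
    have hsb : s = b := by rw [hs_def, hu, zero_add]
    rw [← ha0, hsb, ht0, Real.zero_rpow (by linarith : γ ≠ 0)]
    have h02 : (0:ℝ) ≤ (0:ℝ)^(γ-2) := Real.rpow_nonneg le_rfl _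
    have hz : 0 ≤ b^(2:ℕ) * (0:ℝ)^(γ-2) := mul_nonneg (pow_nonneg hb 2) h02
    have hc1 : 0 ≤ (2^γ + γ + γ/2 + 9*K) * (b^γ) :=
      mul_nonneg (by linarith) hbγ
    have hc2 : 0 ≤ (2^γ + γ + γ/2 + 9*K + 1) * (b^(2:ℕ) * (0:ℝ)^(γ-2)) :=
      mul_nonneg (by linarith) hz
    nlinarith [hc1, hc2]
  · rcases le_or_gt b a with hba | hba
    · -- case 0 < a, b ≤ a : Taylor-type expansion
      have ha2 : (0:ℝ) < a^2 := by positivity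
      set x := (2*t + b^2)/a^2 with hx_def
      have haxeq : a^2 * x = 2*t + b^2 := by
        rw [hx_def]; field_simp
      have h1 : -1 ≤ x := by
        rw [hx_def, le_div_iff₀ ha2]
        nlinarith [sq_nonneg s]
      have h3 : x ≤ 3 := by
        rw [hx_def, div_le_iff₀ ha2]
        nlinarith [mul_nonneg ha (sub_nonneg.mpr hba), mul_self_le_mul_self hb hba]
      have hxineq := hbound x h1 h3
      have h1x : (0:ℝ) ≤ 1 + x := by linarith
      have hsx : s^2 = a^2*(1+x) := by linear_combination hs2 - haxeq
      have e2 : (a^2 : ℝ) ^ (γ/2) = a ^ γ := by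
        rw [← Real.rpow_natCast a 2, ← Real.rpow_mul ha]
        congr 1
        push_cast; ring
      have e1 : s ^ γ = a ^ γ * (1+x) ^ (γ/2) := by
        rw [← e2, ← Real.mul_rpow (sq_nonneg a) h1x, ← hsx,
          ← Real.rpow_natCast s 2, ← Real.rpow_mul hs]
        congr 1
        push_cast; ring
      have e3 : a ^ γ = a ^ (γ-2) * a^2 := by
        rw [← Real.rpow_natCast a 2, ← Real.rpow_add ha0]
        congr 1
        push_cast; ring
      have haγ : 0 ≤ a ^ γ := Real.rpow_nonneg ha γ
      have main : s ^ γ ≤ a^γ + (γ/2)*(a^γ*x) + K*(a^γ*x^2) := by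
        calc s ^ γ = a ^ γ * (1+x) ^ (γ/2) := e1
          _ ≤ a ^ γ * (1 + (γ/2)*x + K*x^2) := mul_le_mul_of_nonneg_left hxineq haγ
          _ = a^γ + (γ/2)*(a^γ*x) + K*(a^γ*x^2) := by ring
      have key1 : (γ/2)*(a^γ*x) = γ*t*a^(γ-2) + (γ/2)*(b^2*a^(γ-2)) := by
        rw [e3]; linear_combination ((γ/2) * a^(γ-2)) * haxeq
      have f1 : 0 ≤ 3*(a*b) - (2*t+b^2) := by
        have := mul_nonneg hb (sub_nonneg.mpr hba)
        nlinarith [ht1]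
      have f2 : 0 ≤ 3*(a*b) + (2*t+b^2) := by
        nlinarith [ht2, mul_nonneg ha hb, sq_nonneg b]
      have h9 : (a^2*x)^2 ≤ 9*(a^2*b^2) := by
        rw [haxeq]
        nlinarith [mul_nonneg f1 f2]
      have hx2 : a^2*x^2 ≤ 9*b^2 := by
        have h9' : a^2*(a^2*x^2) ≤ a^2*(9*b^2) := by linarith [h9]
        exact (mul_le_mul_iff_right₀ ha2).mp h9'
      have key2 : K*(a^γ*x^2) ≤ K*(9*(b^2*a^(γ-2))) := by
        apply mul_le_mul_of_nonneg_left _ hK.le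
        rw [e3]
        linarith [mul_le_mul_of_nonneg_left hx2 hA2]
      have hcb : 0 ≤ (2^γ + γ + γ/2 + 9*K + 1) * (b^γ) :=
        mul_nonneg (by linarith) hbγ
      have hcb2 : 0 ≤ (2^γ + γ + 1) * (b^2*a^(γ-2)) :=
        mul_nonneg (by linarith) (mul_nonneg (sq_nonneg b) hA2)
      linarith [main, key1, key2, hcb, hcb2, mul_nonneg h2γ.le hbγ]
    · -- case a < b : crude bound
      have hb0 : 0 < b := lt_of_le_of_lt ha hba
      have hs_le : s ≤ a + b := norm_add_le u v
      have h2b : s ≤ 2*b := by linarith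
      have hsγ : s^γ ≤ (2*b)^γ := Real.rpow_le_rpow hs h2b hγ0.le
      have h2bγ : ((2:ℝ)*b)^γ = 2^γ * b^γ := Real.mul_rpow (by norm_num) hb
      have hab2 : a^(γ-2) ≤ b^(γ-2) := Real.rpow_le_rpow ha hba.le (by linarith)
      have hB2 : 0 ≤ b^(γ-2) := Real.rpow_nonneg hb _
      have eb : b ^ γ = b ^ (γ-2) * b^2 := by
        rw [← Real.rpow_natCast b 2, ← Real.rpow_add hb0]
        congr 1
        push_cast; ring
      have haγ : 0 ≤ a ^ γ := Real.rpow_nonneg ha γ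
      have m1 : -(a*b)*a^(γ-2) ≤ t*a^(γ-2) := mul_le_mul_of_nonneg_right ht2 hA2
      have m2 : γ*(-(a*b)*a^(γ-2)) ≤ γ*(t*a^(γ-2)) := mul_le_mul_of_nonneg_left m1 hγ0.le
      have m3a : a*a^(γ-2) ≤ b*b^(γ-2) := mul_le_mul hba.le hab2 hA2 hb
      have m3b : b*(a*a^(γ-2)) ≤ b*(b*b^(γ-2)) := mul_le_mul_of_nonneg_left m3a hb
      have m4 : γ*(b*(a*a^(γ-2))) ≤ γ*(b*(b*b^(γ-2))) := mul_le_mul_of_nonneg_left m3b hγ0.le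
      have m5 : γ*(b*(b*b^(γ-2))) = γ*b^γ := by rw [eb]; ring
      have hcb : 0 ≤ (2^γ + γ/2 + 9*K + 1) * (b^γ) :=
        mul_nonneg (by linarith) hbγ
      have hcb2 : 0 ≤ (2^γ + γ + γ/2 + 9*K + 1) * (b^2*a^(γ-2)) :=
        mul_nonneg (by linarith) (mul_nonneg (sq_nonneg b) hA2)
      linarith [hsγ, h2bγ, m2, m4, m5, hcb, hcb2, haγ, mul_nonneg h2γ.le hbγ, mul_nonneg hγ0.le hbγ, mul_nonneg hK.le hbγ]
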